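/- Let Γ ⊆ ℝⁿ be a regular open convex cone and ψ a continuous function on Γ with 0 ≤ R_ψ < ∞, where R_ψ = limsup_{y ∈ Γ, |y| → ∞} ψ(y)/|y|. Then for every α ∈ (0,∞), U_α(Γ,ψ) ⊆ Γ* + {t ∈ ℝⁿ : |t| ≤ R_ψ}, and also U_∞(Γ,ψ) ⊆ Γ* + {t ∈ ℝⁿ : |t| ≤ R_ψ}. -/

import Mathlib

open MeasureTheory Real Filter Set Metric
open scoped ENNReal Topology Pointwise

noncomputable section

/-- Real points of `ℝⁿ` (Euclidean). -/
abbrev RS (n : ℕ) := EuclideanSpace ℝ (Fin n)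
/-- Complex points of `ℂⁿ` (Euclidean). -/
abbrev CS (n : ℕ) := EuclideanSpace ℂ (Fin n)

/-- The point `z = x + i y` of `ℂⁿ`. -/
def tmk {n : ℕ} (x y : RS n) : CS n :=
  (WithLp.equiv 2 (Fin n → ℂ)).symm fun j => (x j : ℂ) + (y j : ℂ) * Complex.I

/-- The tube `T_B = ℝⁿ + iB` over a base `B ⊆ ℝⁿ`. -/
def tube {n : ℕ} (B : Set (RS n)) : Set (CS n) :=
  {z | ((WithLp.equiv 2 (Fin n → ℝ)).symm fun j => (z j).im) ∈ B}

/-- Real dot product `t ⬝ y`. -/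
def rdot {n : ℕ} (t y : RS n) : ℝ := ∑ j, t j * y j

/-- Complex bilinear pairing `t ⬝ z` of a real vector with a complex vector. -/
def cdot {n : ℕ} (t : RS n) (z : CS n) : ℂ := ∑ j, (t j : ℂ) * z j

/-- The set `U_α(B,ψ) = {t ∈ ℝⁿ : ∫_B e^{−2πα(t·y + ψ(y))} dy < ∞}`. -/
def Uset {n : ℕ} (B : Set (RS n)) (ψ : RS n → ℝ) (α : ℝ) : Set (RS n) :=
  {t | ∫⁻ y in B, ENNReal.ofReal (Real.exp (-(2 * Real.pi * α * (rdot t y + ψ y)))) < ⊤}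

/-- An open cone: a nonempty open set not containing `0`, closed under positive
linear combinations (hence convex). -/
def IsOpenConvexCone {n : ℕ} (Γ : Set (RS n)) : Prop :=
  IsOpen Γ ∧ Γ.Nonempty ∧ (0 : RS n) ∉ Γ ∧
    ∀ x ∈ Γ, ∀ y ∈ Γ, ∀ a b : ℝ, 0 < a → 0 < b → a • x + b • y ∈ Γ

/-- The dual cone `Γ* = {y : y·x ≥ 0 for all x ∈ Γ}`. -/
def dualCone {n : ℕ} (Γ : Set (RS n)) : Set (RS n) :=
  {y | ∀ x ∈ Γ, 0 ≤ rdot y x}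

/-- A regular (open convex) cone: the dual cone has nonempty interior. -/
def IsRegularCone {n : ℕ} (Γ : Set (RS n)) : Prop :=
  IsOpenConvexCone Γ ∧ (interior (dualCone Γ)).Nonempty

/-- The filter of `y ∈ Γ` with `|y| → ∞`. -/
def coneAtInfty {n : ℕ} (Γ : Set (RS n)) : Filter (RS n) :=
  Filter.comap norm Filter.atTop ⊓ Filter.principal Γ

/-- The set `U_∞(Γ,ψ) = {t : inf_{y ∈ Γ} (y·t + ψ(y)) > −∞}`. -/
def UsetInf {n : ℕ} (Γ : Set (RS n)) (ψ : RS n → ℝ) : Set (RS n) :=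
  {t | BddBelow ((fun y => rdot y t + ψ y) '' Γ)}

open scoped RealInnerProductSpace

set_option maxHeartbeats 1000000

lemma rdot_eq_inner {n : ℕ} (t y : RS n) : rdot t y = ⟪t, y⟫ := by
  simp [rdot, PiLp.inner_apply, RCLike.inner_apply, mul_comm]

/-- The convex cone structure on `Γ`. -/
def coneOf {n : ℕ} (Γ : Set (RS n)) (h : IsOpenConvexCone Γ) : ConvexCone ℝ (RS n) where
  carrier := Γ
  smul_mem' := by
    intro c hc x hx
    have := h.2.2.2 x hx x hx (c/2) (c/2) (by linarith) (by linarith)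
    have h2 : (c/2) • x + (c/2) • x = c • x := by
      rw [← add_smul]; norm_num
    rwa [h2] at this
  add_mem' := by
    intro x hx y hy
    have := h.2.2.2 x hx y hy 1 1 one_pos one_pos
    simpa using this

lemma dualCone_eq {n : ℕ} (Γ : Set (RS n)) :
    dualCone Γ = (ProperCone.innerDual Γ : Set (RS n)) := by
  ext y
  simp only [dualCone, mem_setOf_eq, SetLike.mem_coe, ProperCone.mem_innerDual]
  constructor
  · intro h x hx
    have := h x hx
    rw [rdot_eq_inner] at this
    rwa [real_inner_comm]
  · intro h x hx
    have := h hx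
    rw [rdot_eq_inner]
    rwa [real_inner_comm]

lemma innerDualCone_closure {n : ℕ} (Γ : Set (RS n)) :
    ProperCone.innerDual (closure Γ) = ProperCone.innerDual Γ := by
  apply le_antisymm
  · exact ProperCone.innerDual_le_innerDual subset_closure
  · intro y hy
    rw [ProperCone.mem_innerDual] at hy ⊢
    intro x hx
    have hc : closure Γ ⊆ {x : RS n | 0 ≤ ⟪x, y⟫} := by
      apply closure_minimal _ (isClosed_le continuous_const (continuous_id.inner continuous_const))
      exact fun z hz => hy hz
    exact hc hx

lemma convexCone_bipolar {n : ℕ} (K : ConvexCone ℝ (RS n)) (hKne : (K : Set (RS n)).Nonempty)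
    (hKclosed : IsClosed (K : Set (RS n))) :
    (ProperCone.innerDual (ProperCone.innerDual (K : Set (RS n)) : Set (RS n)) : Set (RS n))
      = K := by
  have h := ProperCone.innerDual_innerDual
    (⟨K.toPointedCone (ConvexCone.Pointed.of_nonempty_of_isClosed hKne hKclosed), hKclosed⟩ :
      ProperCone ℝ (RS n))
  exact congrArg (fun C : ProperCone ℝ (RS n) => (C : Set (RS n))) h

/-- Key geometric lemma: if `t ∉ Γ* + closedBall 0 R` then there is a unit vector
`e ∈ closure Γ` with `⟪t, e⟫ < -R`. -/
lemma exists_unit_dir {n : ℕ} {Γ : Set (RS n)} (hΓ : IsOpenConvexCone Γ) {t : RS n} {R : ℝ}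
    (hR : 0 ≤ R) (ht : t ∉ dualCone Γ + Metric.closedBall (0 : RS n) R) :
    ∃ e ∈ closure Γ, ‖e‖ = 1 ∧ ⟪t, e⟫ < -R := by
  set D : Set (RS n) := dualCone Γ with hD
  have hDdual : D = (ProperCone.innerDual Γ : Set (RS n)) := dualCone_eq Γ
  have hDconv : Convex ℝ D := hDdual ▸ (ProperCone.innerDual Γ).convex
  have hDclosed : IsClosed D := hDdual ▸ (ProperCone.innerDual Γ).isClosed
  have hDne : D.Nonempty := ⟨0, fun x _ => by simp [rdot]⟩
  obtain ⟨z, hzD, hinf⟩ := exists_norm_eq_iInf_of_complete_convex hDne hDclosed.isComplete hDconv t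
  have hinner := (norm_eq_iInf_iff_real_inner_le_zero hDconv hzD).1 hinf
  set v : RS n := t - z with hv
  set d : ℝ := ‖v‖ with hd
  have hdR : R < d := by
    by_contra hle
    push_neg at hle
    exact ht ⟨z, hzD, v, by simpa [mem_closedBall, dist_eq_norm] using hle, by simp [hv]⟩
  have hd0 : 0 < d := lt_of_le_of_lt hR hdR
  -- ⟪v, z⟫ = 0
  have hmem0 : (0 : RS n) ∈ D := fun x _ => by simp [rdot]
  have hmem2 : (2 : ℝ) • z ∈ D := by
    rw [hDdual] at hzD ⊢
    rw [SetLike.mem_coe, ProperCone.mem_innerDual] at *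
    intro x hx
    rw [real_inner_smul_right]
    have := hzD hx
    positivity
  have h1 : ⟪v, (0:RS n) - z⟫ ≤ 0 := hinner 0 hmem0
  have h2 : ⟪v, (2:ℝ) • z - z⟫ ≤ 0 := hinner _ hmem2
  have hvz : ⟪v, z⟫ = 0 := by
    have e1 : ((0:RS n) - z) = -z := by abel
    have e2 : ((2:ℝ) • z - z) = z := by
      rw [two_smul]; abel
    rw [e1, inner_neg_right] at h1
    rw [e2] at h2
    linarith
  have hvw : ∀ w ∈ D, ⟪v, w⟫ ≤ 0 := by
    intro w hw
    have := hinner w hw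
    rw [inner_sub_right, hvz] at this
    linarith
  -- `-v` belongs to the double dual of `closure Γ`, which is `closure Γ`
  set K : ConvexCone ℝ (RS n) := (coneOf Γ hΓ).closure with hK
  have hKcar : (K : Set (RS n)) = closure Γ := rfl
  have hKne : (K : Set (RS n)).Nonempty := by
    rw [hKcar]; exact hΓ.2.1.closure
  have hKclosed : IsClosed (K : Set (RS n)) := by rw [hKcar]; exact isClosed_closure
  have hbipolar := convexCone_bipolar K hKne hKclosed
  have hdualK : (ProperCone.innerDual (K : Set (RS n)) : Set (RS n)) = D := by
    rw [hKcar, innerDualCone_closure, hDdual]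
  have hnegv : -v ∈ (K : Set (RS n)) := by
    have hm : -v ∈ (ProperCone.innerDual (ProperCone.innerDual (K : Set (RS n)) : Set (RS n)) : Set (RS n)) := by
      rw [SetLike.mem_coe, ProperCone.mem_innerDual]
      intro x hx
      rw [hdualK] at hx
      have := hvw x hx
      rw [inner_neg_right, real_inner_comm]
      linarith
    rw [hbipolar] at hm
    exact SetLike.mem_coe.mpr hm
  refine ⟨(d⁻¹ : ℝ) • (-v), ?_, ?_, ?_⟩
  · rw [← hKcar]
    exact K.smul_mem (by positivity) hnegv
  · rw [norm_smul, norm_neg, ← hd]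
    simp [abs_of_pos hd0, inv_mul_cancel₀ hd0.ne']
  · have htz : t = z + v := by rw [hv]; abel
    have hzv : ⟪z, v⟫ = 0 := by rw [real_inner_comm]; exact hvz
    rw [real_inner_smul_right, inner_neg_right, htz, inner_add_left, hzv,
      real_inner_self_eq_norm_sq]
    have hnd : ‖v‖ = d := rfl
    rw [hnd]
    have : d⁻¹ * -(0 + d^2) = -d := by
      field_simp
      ring
    rw [this]
    linarith



lemma eventual_bound {n : ℕ} {Γ : Set (RS n)} {ψ : RS n → ℝ} {Rψ : ℝ}
    (hbd : Filter.IsBoundedUnder (· ≤ ·) (coneAtInfty Γ) fun y => ψ y / ‖y‖)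
    (hlim : Filter.limsup (fun y => ψ y / ‖y‖) (coneAtInfty Γ) = Rψ)
    {ε : ℝ} (hε : 0 < ε) :
    ∃ M : ℝ, 1 ≤ M ∧ ∀ y ∈ Γ, M ≤ ‖y‖ → ψ y ≤ (Rψ + ε) * ‖y‖ := by
  have h : ∀ᶠ y in coneAtInfty Γ, ψ y / ‖y‖ < Rψ + ε :=
    Filter.eventually_lt_of_limsup_lt (by rw [hlim]; linarith) hbd
  rw [coneAtInfty, Filter.eventually_inf_principal] at h
  rw [Filter.eventually_comap] at h
  rw [Filter.eventually_atTop] at h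
  obtain ⟨M0, hM0⟩ := h
  refine ⟨max M0 1, le_max_right _ _, ?_⟩
  intro y hy hMy
  have h1 : (1:ℝ) ≤ ‖y‖ := le_trans (le_max_right _ _) hMy
  have hlt := hM0 ‖y‖ (le_trans (le_max_left _ _) hMy) y rfl hy
  have hpos : (0:ℝ) < ‖y‖ := by linarith
  have : ψ y = (ψ y / ‖y‖) * ‖y‖ := by field_simp
  rw [this]
  have := le_of_lt hlt
  nlinarith

lemma key_lemma {n : ℕ} {Γ : Set (RS n)} (hΓ : IsOpenConvexCone Γ)
    {ψ : RS n → ℝ} {Rψ : ℝ} {t : RS n} (hR0 : 0 ≤ Rψ)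
    (hbd : Filter.IsBoundedUnder (· ≤ ·) (coneAtInfty Γ) fun y => ψ y / ‖y‖)
    (hlim : Filter.limsup (fun y => ψ y / ‖y‖) (coneAtInfty Γ) = Rψ)
    (ht : t ∉ dualCone Γ + Metric.closedBall (0 : RS n) Rψ) :
    ∃ e' : RS n, ∃ δ c C M₀ : ℝ, 0 < δ ∧ 0 < c ∧ 1 ≤ M₀ ∧
      ∀ s : ℝ, M₀ ≤ s → ∀ y ∈ Metric.ball (s • e') δ,
        y ∈ Γ ∧ rdot t y + ψ y ≤ -(c * s) + C := by
  obtain ⟨e, hecl, hen, hte⟩ := exists_unit_dir hΓ hR0 ht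
  set c₀ : ℝ := -Rψ - ⟪t, e⟫ with hc₀def
  have hc₀ : 0 < c₀ := by simp only [hc₀def]; linarith
  set ε : ℝ := c₀ / 4 with hεdef
  have hε : 0 < ε := by positivity
  obtain ⟨M, hM1, hMb⟩ := eventual_bound hbd hlim hε
  set T : ℝ := ‖t‖ + Rψ + ε with hTdef
  have hT : 0 ≤ T := by
    have := norm_nonneg t; simp only [hTdef]; linarith
  set δ₁ : ℝ := min (c₀ / (4 * (T + 1))) (1/2) with hδ₁def
  have hδ₁pos : 0 < δ₁ := by
    apply lt_min _ (by norm_num)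
    positivity
  have hδ₁half : δ₁ ≤ 1/2 := min_le_right _ _
  have hTδ₁ : T * δ₁ ≤ c₀ / 4 := by
    have h1 : δ₁ ≤ c₀ / (4 * (T + 1)) := min_le_left _ _
    have h2 : T * δ₁ ≤ T * (c₀ / (4 * (T + 1))) := mul_le_mul_of_nonneg_left h1 hT
    have h3 : T * (c₀ / (4 * (T + 1))) ≤ c₀ / 4 := by
      rw [mul_div_assoc'] at *
      rw [div_le_div_iff₀ (by positivity) (by norm_num)]
      nlinarith
    linarith
  -- pick e' ∈ Γ close to e
  obtain ⟨e', he'b, he'Γ⟩ : ∃ e', e' ∈ Metric.ball e δ₁ ∧ e' ∈ Γ := by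
    have := Metric.mem_closure_iff.1 hecl δ₁ hδ₁pos
    obtain ⟨b, hbΓ, hbd'⟩ := this
    exact ⟨b, by rwa [Metric.mem_ball, dist_comm], hbΓ⟩
  have hee' : ‖e' - e‖ ≤ δ₁ := by
    rw [Metric.mem_ball, dist_eq_norm] at he'b
    linarith
  obtain ⟨δ₂, hδ₂pos, hδ₂⟩ := Metric.isOpen_iff.1 hΓ.1 e' he'Γ
  set δ : ℝ := min δ₂ δ₁ with hδdef
  have hδpos : 0 < δ := lt_min hδ₂pos hδ₁pos
  have hδδ₂ : δ ≤ δ₂ := min_le_left _ _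
  have hδδ₁ : δ ≤ δ₁ := min_le_right _ _
  -- bounds on e'
  have hB1 : ‖e'‖ ≤ 1 + δ₁ := by
    calc ‖e'‖ = ‖e + (e' - e)‖ := by congr 1; abel
    _ ≤ ‖e‖ + ‖e' - e‖ := norm_add_le _ _
    _ ≤ 1 + δ₁ := by rw [hen]; linarith
  have hB2 : 1 - δ₁ ≤ ‖e'‖ := by
    have h := norm_sub_norm_le e e'
    rw [hen] at h
    have h2 : ‖e - e'‖ ≤ δ₁ := by rw [← norm_neg (e - e'), neg_sub]; exact hee'
    linarith
  have hA : ⟪t, e'⟫ ≤ ⟪t, e⟫ + ‖t‖ * δ₁ := by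
    have h1 : ⟪t, e'⟫ = ⟪t, e⟫ + ⟪t, e' - e⟫ := by
      rw [← inner_add_right]; congr 1; abel
    have h2 : ⟪t, e' - e⟫ ≤ ‖t‖ * ‖e' - e‖ := real_inner_le_norm _ _
    have h3 : ‖t‖ * ‖e' - e‖ ≤ ‖t‖ * δ₁ := mul_le_mul_of_nonneg_left hee' (norm_nonneg _)
    linarith
  refine ⟨e', δ, c₀/2, T * δ, max 1 (2*M + 2), hδpos, by positivity, le_max_left _ _, ?_⟩
  intro s hs y hy
  have hs1 : (1:ℝ) ≤ s := le_trans (le_max_left _ _) hs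
  have hs0 : 0 < s := by linarith
  have hsM : 2*M + 2 ≤ s := le_trans (le_max_right _ _) hs
  rw [Metric.mem_ball, dist_eq_norm] at hy
  have hyd : ‖y - s • e'‖ ≤ δ := le_of_lt hy
  -- y ∈ Γ
  have hyΓ : y ∈ Γ := by
    set w : RS n := s⁻¹ • (y - s • e') with hwdef
    have hw : ‖w‖ < δ₂ := by
      rw [hwdef, norm_smul, norm_inv, Real.norm_eq_abs, abs_of_pos hs0]
      calc s⁻¹ * ‖y - s • e'‖ ≤ 1 * ‖y - s • e'‖ := by
            apply mul_le_mul_of_nonneg_right _ (norm_nonneg _)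
            rw [inv_le_one_iff₀]; right; exact hs1
      _ = ‖y - s • e'‖ := one_mul _
      _ < δ := hy
      _ ≤ δ₂ := hδδ₂
    have hmem : e' + w ∈ Γ := by
      apply hδ₂
      rw [Metric.mem_ball, dist_eq_norm]
      simpa using hw
    have hyeq : y = s • (e' + w) := by
      rw [hwdef, smul_add, smul_inv_smul₀ hs0.ne']
      abel
    rw [hyeq]
    exact (coneOf Γ hΓ).smul_mem hs0 hmem
  -- norm bounds on y
  have hns : ‖s • e'‖ = s * ‖e'‖ := by
    rw [norm_smul, Real.norm_eq_abs, abs_of_pos hs0]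
  have hup : ‖y‖ ≤ s * ‖e'‖ + δ := by
    calc ‖y‖ = ‖s • e' + (y - s • e')‖ := by congr 1; abel
    _ ≤ ‖s • e'‖ + ‖y - s • e'‖ := norm_add_le _ _
    _ ≤ s * ‖e'‖ + δ := by rw [hns]; linarith
  have hlo : s * ‖e'‖ - δ ≤ ‖y‖ := by
    have := norm_sub_norm_le (s • e') y
    rw [hns, ← norm_neg (s • e' - y), neg_sub] at this
    linarith
  have hyM : M ≤ ‖y‖ := by
    have h1 : s * (1 - δ₁) ≤ s * ‖e'‖ := mul_le_mul_of_nonneg_left hB2 hs0.le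
    have h2 : s * (1/2) ≤ s * (1 - δ₁) := by
      apply mul_le_mul_of_nonneg_left _ hs0.le
      linarith
    have hδ1 : δ ≤ 1 := by linarith
    nlinarith
  have hψy : ψ y ≤ (Rψ + ε) * (s * ‖e'‖ + δ) := by
    have := hMb y hyΓ hyM
    have h2 : (Rψ + ε) * ‖y‖ ≤ (Rψ + ε) * (s * ‖e'‖ + δ) :=
      mul_le_mul_of_nonneg_left hup (by linarith)
    linarith
  have hrd : rdot t y ≤ s * ⟪t, e'⟫ + ‖t‖ * δ := by
    rw [rdot_eq_inner]
    have h1 : ⟪t, y⟫ = ⟪t, s • e'⟫ + ⟪t, y - s • e'⟫ := by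
      rw [← inner_add_right]; congr 1; abel
    have h2 : ⟪t, y - s • e'⟫ ≤ ‖t‖ * ‖y - s • e'‖ := real_inner_le_norm _ _
    have h3 : ‖t‖ * ‖y - s • e'‖ ≤ ‖t‖ * δ := mul_le_mul_of_nonneg_left hyd (norm_nonneg _)
    rw [h1, real_inner_smul_right]
    linarith
  refine ⟨hyΓ, ?_⟩
  -- coefficient bound
  have hcoef : ⟪t, e'⟫ + (Rψ + ε) * ‖e'‖ ≤ -(c₀/2) := by
    have h1 : (Rψ + ε) * ‖e'‖ ≤ (Rψ + ε) * (1 + δ₁) := by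
      apply mul_le_mul_of_nonneg_left hB1 (by linarith)
    have h2 : ⟪t, e'⟫ + (Rψ + ε) * (1 + δ₁) ≤ ⟪t, e⟫ + Rψ + ε + T * δ₁ + ‖t‖ * δ₁ - ‖t‖ * δ₁ := by
      simp only [hTdef]
      nlinarith [norm_nonneg t, hδ₁pos.le]
    have h3 : ⟪t, e⟫ + Rψ + ε = -c₀ + ε := by simp only [hc₀def]; ring
    have h4 : ε = c₀ / 4 := hεdef
    linarith
  have hsc : s * (⟪t, e'⟫ + (Rψ + ε) * ‖e'‖) ≤ s * (-(c₀/2)) := by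
    exact mul_le_mul_of_nonneg_left hcoef hs0.le
  have hTδ : ‖t‖ * δ + (Rψ + ε) * δ = T * δ := by simp only [hTdef]; ring
  nlinarith [hrd, hψy, hsc]





lemma rdot_comm {n : ℕ} (t y : RS n) : rdot t y = rdot y t := by
  simp [rdot, mul_comm]


/-- Lemma 2 of the paper: for a regular open convex cone `Γ` and `ψ ∈ C(Γ)` with
`0 ≤ R_ψ = limsup_{y∈Γ,|y|→∞} ψ(y)/|y| < ∞`, every `U_α(Γ,ψ)` (`0 < α ≤ ∞`) is
contained in `Γ* + \overline{D(0,R_ψ)}`. -/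
theorem statement9 {n : ℕ} (Γ : Set (RS n)) (hΓ : IsRegularCone Γ)
    (ψ : RS n → ℝ) (hψ : ContinuousOn ψ Γ) (Rψ : ℝ) (hR0 : 0 ≤ Rψ)
    (hbd : Filter.IsBoundedUnder (· ≤ ·) (coneAtInfty Γ) fun y => ψ y / ‖y‖)
    (hlim : Filter.limsup (fun y => ψ y / ‖y‖) (coneAtInfty Γ) = Rψ) :
    (∀ α : ℝ, 0 < α →
        Uset Γ ψ α ⊆ dualCone Γ + Metric.closedBall (0 : RS n) Rψ) ∧
      UsetInf Γ ψ ⊆ dualCone Γ + Metric.closedBall (0 : RS n) Rψ := by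
  constructor
  · intro α hα t htU
    by_contra ht
    obtain ⟨e', δ, c, C, M₀, hδ, hc, hM₀, hkey⟩ := key_lemma hΓ.1 hR0 hbd hlim ht
    rw [Uset, mem_setOf_eq] at htU
    set I : ℝ≥0∞ :=
      ∫⁻ y in Γ, ENNReal.ofReal (Real.exp (-(2 * Real.pi * α * (rdot t y + ψ y)))) with hI
    set V : ℝ≥0∞ := volume (Metric.ball (0 : RS n) δ) with hV
    have hV0 : V ≠ 0 := (measure_ball_pos volume 0 hδ).ne'
    have hVtop : V ≠ ⊤ := measure_ball_lt_top.ne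
    -- lower bound for each s ≥ M₀
    have hlb : ∀ s : ℝ, M₀ ≤ s →
        ENNReal.ofReal (Real.exp (2 * Real.pi * α * (c * s - C))) * V ≤ I := by
      intro s hs
      have hsub : Metric.ball (s • e') δ ⊆ Γ := fun y hy => (hkey s hs y hy).1
      calc ENNReal.ofReal (Real.exp (2 * Real.pi * α * (c * s - C))) * V
          = ∫⁻ _ in Metric.ball (s • e') δ,
              ENNReal.ofReal (Real.exp (2 * Real.pi * α * (c * s - C))) ∂volume := by
            rw [setLIntegral_const, Measure.addHaar_ball_center]
      _ ≤ ∫⁻ y in Metric.ball (s • e') δ,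
              ENNReal.ofReal (Real.exp (-(2 * Real.pi * α * (rdot t y + ψ y)))) ∂volume := by
            apply setLIntegral_mono' measurableSet_ball
            intro y hy
            apply ENNReal.ofReal_le_ofReal
            apply Real.exp_le_exp.2
            have hb := (hkey s hs y hy).2
            have hpos : 0 < 2 * Real.pi * α := by positivity
            nlinarith
      _ ≤ I := lintegral_mono_set hsub
    -- tendsto ⊤
    have htend : Filter.Tendsto
        (fun s : ℝ => ENNReal.ofReal (Real.exp (2 * Real.pi * α * (c * s - C))) * V)
        atTop (𝓝 ⊤) := by
      have h1 : Filter.Tendsto (fun s : ℝ => 2 * Real.pi * α * (c * s - C)) atTop atTop := by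
        apply Filter.Tendsto.const_mul_atTop (by positivity)
        apply Filter.tendsto_atTop_add_const_right
        exact Filter.Tendsto.const_mul_atTop hc Filter.tendsto_id
      have h2 := (ENNReal.tendsto_ofReal_atTop.comp (Real.tendsto_exp_atTop.comp h1))
      have h3 := ENNReal.Tendsto.mul_const h2 (Or.inl (ENNReal.top_ne_zero) : (⊤ : ℝ≥0∞) ≠ 0 ∨ V ≠ ⊤)
      rwa [ENNReal.top_mul hV0] at h3
    have hev : ∀ᶠ s in (atTop : Filter ℝ),
        ENNReal.ofReal (Real.exp (2 * Real.pi * α * (c * s - C))) * V ≤ I :=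
      Filter.eventually_atTop.2 ⟨M₀, hlb⟩
    have : (⊤ : ℝ≥0∞) ≤ I := le_of_tendsto htend hev
    exact absurd (lt_of_le_of_lt this htU) (lt_irrefl _)
  · intro t htU
    by_contra ht
    obtain ⟨e', δ, c, C, M₀, hδ, hc, hM₀, hkey⟩ := key_lemma hΓ.1 hR0 hbd hlim ht
    obtain ⟨b, hb⟩ := htU
    set s : ℝ := max M₀ ((C - b + 1) / c) with hs
    have hsM : M₀ ≤ s := le_max_left _ _
    have h2 := hkey s hsM (s • e') (Metric.mem_ball_self hδ)
    have hmem : rdot (s • e') t + ψ (s • e') ∈ (fun y => rdot y t + ψ y) '' Γ :=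
      ⟨s • e', h2.1, rfl⟩
    have hble := hb hmem
    rw [rdot_comm] at hble
    have hcs : C - b + 1 ≤ c * s := by
      have h3 : (C - b + 1) / c ≤ s := le_max_right _ _
      calc C - b + 1 = c * ((C - b + 1) / c) := by field_simp
      _ ≤ c * s := mul_le_mul_of_nonneg_left h3 hc.le
    have := h2.2
    linarith


end
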